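/- For every n ≥ 1, the number of (unlabeled) biplane trees with exactly n nodes equals binomial(3n−2, n−1)/n; equivalently, n times this number equals binomial(3n−2, n−1). (This is sequence A006013 of the OEIS.) -/

import Mathlib

/-- An unlabeled biplane tree: the children of every node are organized as an ordered
pair of (possibly empty) ordered forests of biplane trees. -/
inductive BTree : Type where
  | node : List BTree → List BTree → BTree

mutual
  /-- The number of nodes of a biplane tree. -/
  def BTree.size : BTree → ℕ
    | .node fl fr => 1 + BTree.forestSize fl + BTree.forestSize fr
  /-- The total number of nodes of a forest of biplane trees. -/
  def BTree.forestSize : List BTree → ℕ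
    | [] => 0
    | t :: ts => t.size + BTree.forestSize ts
end

namespace BPT

mutual
  def enc : BTree → List (ℕ × ℕ)
    | .node fl fr => (fl.length, fr.length) :: (encF fl ++ encF fr)
  def encF : List BTree → List (ℕ × ℕ)
    | [] => []
    | t :: ts => enc t ++ encF ts
end

def wsum (L : List (ℕ × ℕ)) : ℕ := (L.map fun p => p.1 + p.2).sum

def bal (L : List (ℕ × ℕ)) : ℤ := (wsum L : ℤ) - L.length

@[simp] lemma wsum_nil : wsum [] = 0 := rfl

@[simp] lemma wsum_cons (p : ℕ × ℕ) (L : List (ℕ × ℕ)) :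
    wsum (p :: L) = p.1 + p.2 + wsum L := by simp [wsum]

@[simp] lemma wsum_append (A B : List (ℕ × ℕ)) : wsum (A ++ B) = wsum A + wsum B := by
  simp [wsum]

@[simp] lemma bal_nil : bal [] = 0 := rfl

lemma bal_append (A B : List (ℕ × ℕ)) : bal (A ++ B) = bal A + bal B := by
  simp [bal]; ring

lemma bal_cons (p : ℕ × ℕ) (B : List (ℕ × ℕ)) :
    bal (p :: B) = (p.1 + p.2 - 1) + bal B := by
  simp [bal, wsum]; ring

lemma size_pos (t : BTree) : 1 ≤ t.size := by
  cases t with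
  | node fl fr => rw [BTree.size]; omega

lemma encF_append (F G : List BTree) : encF (F ++ G) = encF F ++ encF G := by
  induction F with
  | nil => simp [encF]
  | cons t ts ih => simp [encF, ih]

lemma encF_aux (n : ℕ) : ∀ F : List BTree, BTree.forestSize F ≤ n →
    (encF F).length = BTree.forestSize F ∧ wsum (encF F) + F.length = BTree.forestSize F := by
  induction n with
  | zero =>
    intro F hF
    cases F with
    | nil => simp [encF, BTree.forestSize]
    | cons t ts => exfalso; have := size_pos t; rw [BTree.forestSize] at hF; omega
  | succ n ih =>
    intro F hF
    cases F with
    | nil => simp [encF, BTree.forestSize]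
    | cons t ts =>
      cases t with
      | node fl fr =>
        rw [BTree.forestSize, BTree.size] at hF ⊢
        have h1 : BTree.forestSize fl ≤ n := by omega
        have h2 : BTree.forestSize fr ≤ n := by omega
        have h3 : BTree.forestSize ts ≤ n := by omega
        obtain ⟨l1, w1⟩ := ih fl h1
        obtain ⟨l2, w2⟩ := ih fr h2
        obtain ⟨l3, w3⟩ := ih ts h3
        rw [encF, enc]
        constructor
        · simp [l1, l2, l3]; omega
        · simp only [wsum_append, wsum_cons, List.cons_append, List.length_cons,
            List.length_append]
          omega


lemma encF_length (F : List BTree) : (encF F).length = BTree.forestSize F :=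
  (encF_aux (BTree.forestSize F) F le_rfl).1

lemma wsum_encF (F : List BTree) : wsum (encF F) + F.length = BTree.forestSize F :=
  (encF_aux (BTree.forestSize F) F le_rfl).2

lemma bal_encF (F : List BTree) : bal (encF F) = -(F.length : ℤ) := by
  have h1 := encF_length F
  have h2 := wsum_encF F
  simp [bal, h1]
  omega

/-- Validity of a word as the code of a forest of `m` trees. -/
def VF (m : ℕ) (M : List (ℕ × ℕ)) : Prop :=
  bal M = -(m : ℤ) ∧ ∀ ℓ < M.length, 1 - (m : ℤ) ≤ bal (M.take ℓ)

lemma VF.take_le {m : ℕ} {M : List (ℕ × ℕ)} (h : VF m M) (i : ℕ) :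
    -(m : ℤ) ≤ bal (M.take i) := by
  rcases lt_or_ge i M.length with hi | hi
  · have := h.2 i hi; omega
  · rw [List.take_of_length_le hi, h.1]

theorem VF_encF : ∀ n (F : List BTree), BTree.forestSize F ≤ n → VF F.length (encF F) := by
  intro n
  induction n with
  | zero =>
    intro F hF
    cases F with
    | nil => exact ⟨by simp [encF], by simp [encF]⟩
    | cons t ts => exfalso; have := size_pos t; rw [BTree.forestSize] at hF; omega
  | succ n ih =>
    intro F hF
    cases F with
    | nil => exact ⟨by simp [encF], by simp [encF]⟩
    | cons t ts =>
      cases t with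
      | node fl fr =>
        rw [BTree.forestSize, BTree.size] at hF
        have h1 : BTree.forestSize fl ≤ n := by omega
        have h2 : BTree.forestSize fr ≤ n := by omega
        have h3 : BTree.forestSize ts ≤ n := by omega
        have v1 := ih fl h1
        have v2 := ih fr h2
        have v3 := ih ts h3
        have hE : encF (BTree.node fl fr :: ts)
            = (fl.length, fr.length) :: (encF fl ++ (encF fr ++ encF ts)) := by
          rw [encF, enc]; simp
        rw [hE]
        constructor
        · rw [bal_cons, bal_append, bal_append, v1.1, v2.1, v3.1]
          simp only [List.length_cons]
          push_cast
          ring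
        · intro ℓ hℓ
          cases ℓ with
          | zero =>
            simp only [List.take_zero, bal_nil, List.length_cons]
            push_cast
            omega
          | succ r =>
            rw [List.take_succ_cons, bal_cons]
            rw [List.take_append, List.take_append,
              bal_append, bal_append]
            simp only [List.length_cons, List.length_append] at hℓ
            have hr : r < (encF fl).length + ((encF fr).length + (encF ts).length) := by
              omega
            have b1 := v1.take_le r
            have b2 := v2.take_le (r - (encF fl).length)
            have b3 := v3.take_le (r - (encF fl).length - (encF fr).length)
            simp only [List.length_cons, Prod.fst, Prod.snd]
            rcases lt_or_ge r (encF fl).length with hc1 | hc1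
            · have s1 := v1.2 r hc1
              simp only [show r - (encF fl).length = 0 from by omega, Nat.zero_sub,
                List.take_zero, bal_nil]
              have hlf : (encF fl).length = BTree.forestSize fl := encF_length fl
              push_cast
              omega
            · rcases lt_or_ge (r - (encF fl).length) (encF fr).length with hc2 | hc2
              · have s2 := v2.2 _ hc2
                push_cast
                omega
              · have hc3 : r - (encF fl).length - (encF fr).length < (encF ts).length := by
                  omega
                have s3 := v3.2 _ hc3
                push_cast
                omega

theorem VF_enc (t : BTree) : VF 1 (enc t) := by
  have h := VF_encF (BTree.forestSize [t]) [t] le_rfl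
  rwa [encF, encF, List.append_nil] at h

lemma bal_take_succ (M : List (ℕ × ℕ)) (i : ℕ) :
    bal (M.take i) - 1 ≤ bal (M.take (i + 1)) := by
  rcases lt_or_ge i M.length with h | h
  · rw [List.take_succ, List.getElem?_eq_getElem h]
    simp only [Option.toList_some, bal_append, bal_cons, bal_nil]
    have : (0 : ℤ) ≤ (M[i].1 : ℤ) + (M[i].2 : ℤ) := by positivity
    omega
  · rw [List.take_of_length_le h, List.take_of_length_le (by omega)]; omega

lemma first_passage {M : List (ℕ × ℕ)} (h : bal M ≤ -1) :
    ∃ j, 0 < j ∧ j ≤ M.length ∧ bal (M.take j) = -1 ∧ ∀ i < j, 0 ≤ bal (M.take i) := by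
  have hex : ∃ j, bal (M.take j) ≤ -1 := ⟨M.length, by rwa [List.take_length]⟩
  have hj0 : 0 < Nat.find hex := by
    rcases Nat.eq_zero_or_pos (Nat.find hex) with h0 | h0
    · exfalso; have := Nat.find_spec hex; rw [h0] at this; simp [bal] at this
    · exact h0
  have hmin : ∀ i < Nat.find hex, 0 ≤ bal (M.take i) := by
    intro i hi
    have := Nat.find_min hex hi
    omega
  refine ⟨Nat.find hex, hj0, Nat.find_min' hex (by rwa [List.take_length]), ?_, hmin⟩
  have h1 := Nat.find_spec hex
  have h2 := hmin (Nat.find hex - 1) (by omega)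
  have h3 := bal_take_succ M (Nat.find hex - 1)
  rw [show Nat.find hex - 1 + 1 = Nat.find hex from by omega] at h3
  omega

theorem decodeVF : ∀ n, ∀ M : List (ℕ × ℕ), M.length ≤ n → ∀ m, VF m M →
    ∃ F : List BTree, F.length = m ∧ encF F = M := by
  intro n
  induction n with
  | zero =>
    intro M hM m hv
    cases M with
    | nil =>
      refine ⟨List.replicate m (BTree.node [] []), by simp, ?_⟩
      have := hv.1
      simp [bal] at this
      have : m = 0 := by omega
      subst this
      simp [encF]
    | cons p R => simp at hM
  | succ n ih =>
    intro M hM m hv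
    cases m with
    | zero =>
      cases M with
      | nil => exact ⟨[], rfl, rfl⟩
      | cons p R =>
        exfalso
        have := hv.2 0 (by simp)
        simp [bal] at this
    | succ m =>
      have hbal : bal M ≤ -1 := by rw [hv.1]; push_cast; omega
      obtain ⟨j, hj0, hjle, hbA, hpre⟩ := first_passage hbal
      set A := M.take j with hAdef
      set M' := M.drop j with hM'def
      have hMsplit : M = A ++ M' := (List.take_append_drop j M).symm
      have hAlen : A.length = j := by rw [hAdef, List.length_take]; omega
      have hA : VF 1 A := by
        constructor
        · rw [hbA]; norm_num
        · intro ℓ hℓ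
          rw [hAdef, List.take_take, min_eq_left (by omega)]
          have := hpre ℓ (by omega)
          omega
      cases hAe : A with
      | nil => exfalso; rw [hAe] at hAlen; simp at hAlen; omega
      | cons p R =>
        have hbR : bal R = -((p.1 + p.2 : ℕ) : ℤ) := by
          have := hA.1
          rw [hAe, bal_cons] at this
          push_cast
          push_cast at this
          omega
        have hR : VF (p.1 + p.2) R := by
          refine ⟨hbR, ?_⟩
          intro ℓ hℓ
          have h2 := hA.2 (ℓ + 1) (by rw [hAe]; simp; omega)
          rw [hAe, List.take_succ_cons, bal_cons] at h2
          push_cast at h2 ⊢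
          omega
        have hRlen : R.length ≤ n := by
          have : A.length ≤ M.length := by rw [hAdef]; simp
          rw [hAe] at this
          simp at this
          omega
        obtain ⟨G, hGlen, hGenc⟩ := ih R hRlen _ hR
        have hM'v : VF m M' := by
          constructor
          · have : bal M = bal A + bal M' := by rw [hMsplit, bal_append]
            rw [hv.1, hbA] at this
            push_cast at this ⊢
            omega
          · intro ℓ hℓ
            have hlen' : M'.length = M.length - j := by rw [hM'def]; simp
            have h2 := hv.2 (j + ℓ) (by omega)
            rw [List.take_add, ← hAdef, ← hM'def, bal_append, hbA] at h2
            push_cast at h2 ⊢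
            omega
        have hM'len : M'.length ≤ n := by
          rw [hM'def]; simp; omega
        obtain ⟨F', hF'len, hF'enc⟩ := ih M' hM'len _ hM'v
        have hGtake : (G.take p.1).length = p.1 := by
          rw [List.length_take]; omega
        have hGdrop : (G.drop p.1).length = p.2 := by
          rw [List.length_drop]; omega
        refine ⟨BTree.node (G.take p.1) (G.drop p.1) :: F', by simp [hF'len], ?_⟩
        rw [encF, enc, hGtake, hGdrop, ← encF_append, List.take_append_drop, hGenc,
          hF'enc, hMsplit, hAe]

lemma encF_prefix_eq {A A' : List BTree} (hp : encF A <+: encF A')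
    (hl : A.length = A'.length) : encF A = encF A' := by
  obtain ⟨s, hs⟩ := hp
  cases s with
  | nil => simpa using hs
  | cons q qs =>
    exfalso
    have hv := VF_encF (BTree.forestSize A') A' le_rfl
    have hlen : (encF A).length < (encF A').length := by rw [← hs]; simp
    have h2 := hv.2 (encF A).length hlen
    rw [← hs, List.take_left, bal_encF] at h2
    rw [hl] at h2
    omega

lemma encF_cancel {A A' : List BTree} {X X' : List (ℕ × ℕ)}
    (h : encF A ++ X = encF A' ++ X') (hl : A.length = A'.length) :
    encF A = encF A' := by
  have p1 : encF A <+: encF A ++ X := List.prefix_append _ _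
  have p2 : encF A' <+: encF A ++ X := h ▸ List.prefix_append _ _
  rcases le_total (encF A).length (encF A').length with hle | hle
  · exact encF_prefix_eq (List.prefix_of_prefix_length_le p1 p2 hle) hl
  · exact (encF_prefix_eq (List.prefix_of_prefix_length_le p2 p1 hle) hl.symm).symm

theorem encF_inj : ∀ n, ∀ F F' : List BTree, (encF F).length ≤ n →
    F.length = F'.length → encF F = encF F' → F = F' := by
  intro n
  induction n with
  | zero =>
    intro F F' hn hl he
    cases F with
    | nil => cases F' with
      | nil => rfl
      | cons t ts => simp at hl
    | cons t ts =>
      exfalso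
      cases t with
      | node fl fr => rw [encF, enc] at hn; simp at hn
  | succ n ih =>
    intro F F' hn hl he
    cases F with
    | nil => cases F' with
      | nil => rfl
      | cons t ts => simp at hl
    | cons t ts =>
      cases F' with
      | nil => simp at hl
      | cons t' ts' =>
        cases t with
        | node fl fr =>
          cases t' with
          | node fl' fr' =>
            rw [encF, enc, encF, enc] at he
            simp only [List.cons_append, List.cons.injEq, Prod.mk.injEq] at he
            obtain ⟨⟨hfl, hfr⟩, htail⟩ := he
            rw [List.append_assoc, List.append_assoc] at htail
            have h1 : encF fl = encF fl' := encF_cancel htail hfl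
            have hnn : (encF (BTree.node fl fr :: ts)).length ≤ n + 1 := hn
            rw [encF, enc] at hnn
            simp only [List.cons_append, List.length_cons, List.length_append] at hnn
            have efl : fl = fl' := ih fl fl' (by omega) hfl h1
            rw [h1] at htail
            have htail2 := List.append_cancel_left htail
            have h2 : encF fr = encF fr' := encF_cancel htail2 hfr
            have efr : fr = fr' := ih fr fr' (by omega) hfr h2
            rw [h2] at htail2
            have htail3 := List.append_cancel_left htail2
            simp only [List.length_cons] at hl
            have ets : ts = ts' := ih ts ts' (by omega) (by omega) htail3
            rw [efl, efr, ets]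

theorem enc_inj {t t' : BTree} (h : enc t = enc t') : t = t' := by
  have h2 : encF [t] = encF [t'] := by simp [encF, h]
  have := encF_inj (encF [t]).length [t] [t'] le_rfl rfl h2
  simpa using this

lemma wsum_rotate (L : List (ℕ × ℕ)) (k : ℕ) : wsum (L.rotate k) = wsum L := by
  unfold wsum
  exact List.Perm.sum_eq (List.Perm.map _ (List.rotate_perm L k))

lemma bal_rotate (L : List (ℕ × ℕ)) (k : ℕ) : bal (L.rotate k) = bal L := by
  unfold bal
  rw [wsum_rotate, List.length_rotate]

lemma rotate_valid_unique {L : List (ℕ × ℕ)} (hL : VF 1 L) {d : ℕ} (hd : d < L.length)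
    (hrot : VF 1 (L.rotate d)) : d = 0 := by
  by_contra h0
  have hrw : L.rotate d = L.drop d ++ L.take d :=
    List.rotate_eq_drop_append_take (le_of_lt hd)
  have hdl : (L.drop d).length = L.length - d := by simp
  have key : (L.rotate d).take (L.length - d) = L.drop d := by
    rw [hrw, List.take_left' hdl]
  have h1 := hrot.2 (L.length - d) (by rw [List.length_rotate]; omega)
  rw [key] at h1
  have h2 : bal L = bal (L.take d) + bal (L.drop d) := by
    conv_lhs => rw [← List.take_append_drop d L]
    rw [bal_append]
  have h3 := hL.2 d hd
  have h4 := hL.1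
  push_cast at h1 h3 h4
  omega

lemma exists_valid_rotation {L : List (ℕ × ℕ)} (hlen : 0 < L.length) (hbal : bal L = -1) :
    ∃ k < L.length, VF 1 (L.rotate k) := by
  set n := L.length with hn
  set σ : ℕ → ℤ := fun j => bal (L.take j) with hσ
  have hP : ∃ j, j < n ∧ ∀ i < n, σ j ≤ σ i := by
    obtain ⟨j, hj, hmin⟩ := Finset.exists_min_image (Finset.range n) σ
      ⟨0, Finset.mem_range.mpr hlen⟩
    exact ⟨j, Finset.mem_range.mp hj, fun i hi => hmin i (Finset.mem_range.mpr hi)⟩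
  obtain ⟨hkn, hkmin⟩ := Nat.find_spec hP
  set k := Nat.find hP with hk
  have hσ0 : σ 0 = 0 := by simp [hσ, bal]
  have hσn : σ n = -1 := by rw [hσ]; simp only [hn]; rw [List.take_length]; exact hbal
  have hstrict : ∀ i < k, σ k + 1 ≤ σ i := by
    intro i hi
    have hnp := Nat.find_min hP hi
    push_neg at hnp
    obtain ⟨i2, hi2n, hi2⟩ := hnp (lt_trans hi hkn)
    have := hkmin i2 hi2n
    omega
  have hkneg : 0 < k → σ k ≤ -1 := by
    intro hk0
    have := hstrict 0 hk0
    omega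
  have hseg : ∀ i, bal ((L.drop k).take i) = σ (k + i) - σ k := by
    intro i
    have h1 : L.take (k + i) = L.take k ++ (L.drop k).take i := List.take_add (l := L) (i := k) (j := i)
    have h2 : σ (k + i) = σ k + bal ((L.drop k).take i) := by
      rw [hσ]
      simp only
      rw [h1, bal_append]
    omega
  have hdl : (L.drop k).length = n - k := by simp [hn]
  have hdropbal : bal (L.drop k) = -1 - σ k := by
    have h2 : bal L = bal (L.take k) + bal (L.drop k) := by
      conv_lhs => rw [← List.take_append_drop k L]
      rw [bal_append]
    rw [hbal] at h2
    have : σ k = bal (L.take k) := rfl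
    omega
  refine ⟨k, hkn, ?_, ?_⟩
  · rw [bal_rotate, hbal]; norm_num
  · intro ℓ hℓ
    rw [List.length_rotate, ← hn] at hℓ
    have hrw : L.rotate k = L.drop k ++ L.take k :=
      List.rotate_eq_drop_append_take (le_of_lt hkn)
    rw [hrw, List.take_append, bal_append]
    push_cast
    rcases le_or_gt ℓ (n - k) with hc | hc
    · simp only [show ℓ - (L.drop k).length = 0 from by omega, List.take_zero, bal_nil]
      rw [hseg ℓ]
      rcases eq_or_lt_of_le (show k + ℓ ≤ n from by omega) with he | hlt
      · rw [he, hσn]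
        have hk0 : 0 < k := by omega
        have := hkneg hk0
        omega
      · have := hkmin (k + ℓ) hlt
        omega
    · rw [List.take_of_length_le (by omega), hdropbal]
      have hik : ℓ - (L.drop k).length < k := by omega
      rw [List.take_take, min_eq_left (by omega)]
      have hs := hstrict _ hik
      have : σ (ℓ - (L.drop k).length) = bal (L.take (ℓ - (L.drop k).length)) := rfl
      omega

lemma enc_length (t : BTree) : (enc t).length = t.size := by
  have h := encF_length [t]
  rw [encF, encF, List.append_nil] at h
  rw [h, BTree.forestSize, BTree.forestSize]
  omega

lemma enc_wsum {t : BTree} {n : ℕ} (h : t.size = n) : wsum (enc t) + 1 = n := by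
  have hb := (VF_enc t).1
  have hl : (enc t).length = n := by rw [enc_length, h]
  rw [bal, hl] at hb
  push_cast at hb
  omega

def Codes (n : ℕ) : Type := {L : List (ℕ × ℕ) // L.length = n ∧ wsum L + 1 = n}

def Φ (n : ℕ) (x : {t : BTree // t.size = n} × Fin n) : Codes n :=
  ⟨(enc x.1.1).rotate x.2.1, by
    rw [List.length_rotate, wsum_rotate, enc_length, x.1.2]
    exact ⟨rfl, enc_wsum x.1.2⟩⟩

theorem Φ_bij (n : ℕ) (hn : 1 ≤ n) : Function.Bijective (Φ n) := by
  constructor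
  · rintro ⟨⟨t, ht⟩, ⟨k, hk⟩⟩ ⟨⟨t', ht'⟩, ⟨k', hk'⟩⟩ h
    have heq : (enc t).rotate k = (enc t').rotate k' := congrArg Subtype.val h
    have hLt : (enc t).length = n := by rw [enc_length, ht]
    have hLt' : (enc t').length = n := by rw [enc_length, ht']
    set d := (k + (n - k')) % n with hd
    have e1 : enc t' = (enc t).rotate d := by
      have e2 : ((enc t').rotate k').rotate (n - k') = enc t' := by
        rw [List.rotate_rotate, show k' + (n - k') = n from by omega, ← hLt',
          List.rotate_length]
      rw [← e2, ← heq, List.rotate_rotate, hd, ← hLt, List.rotate_mod]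
    have hdn : d < n := Nat.mod_lt _ (by omega)
    have hd0 : d = 0 := by
      refine rotate_valid_unique (VF_enc t) (by rw [hLt]; exact hdn) ?_
      rw [← e1]; exact VF_enc t'
    have htt : t = t' := by
      apply enc_inj
      rw [e1, hd0, List.rotate_zero]
    have hkk : k = k' := by
      have hdvd : n ∣ (k + (n - k')) := Nat.dvd_of_mod_eq_zero (by rw [← hd, hd0])
      obtain ⟨c, hc⟩ := hdvd
      have hlt : n * c < n * 2 := by omega
      have hc2 : c < 2 := Nat.lt_of_mul_lt_mul_left hlt
      interval_cases c <;> omega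
    subst htt hkk
    rfl
  · rintro ⟨L, hlen, hw⟩
    have hbal : bal L = -1 := by rw [bal, hlen]; push_cast; omega
    obtain ⟨k, hk, hv⟩ := exists_valid_rotation (by omega) hbal
    rw [hlen] at hk
    obtain ⟨F, hFlen, hFenc⟩ := decodeVF (L.rotate k).length _ le_rfl 1 hv
    obtain ⟨t, hFt⟩ : ∃ t, F = [t] := by
      cases F with
      | nil => simp at hFlen
      | cons a l => cases l with
        | nil => exact ⟨a, rfl⟩
        | cons b l2 => simp at hFlen
    rw [hFt, encF, encF, List.append_nil] at hFenc
    have hsize : t.size = n := by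
      rw [← enc_length, hFenc, List.length_rotate, hlen]
    refine ⟨⟨⟨t, hsize⟩, ⟨(n - k) % n, Nat.mod_lt _ (by omega)⟩⟩, ?_⟩
    apply Subtype.ext
    show (enc t).rotate ((n - k) % n) = L
    have hLt : (enc t).length = n := by rw [enc_length, hsize]
    rw [← hLt, List.rotate_mod, hLt, hFenc, List.rotate_rotate,
      show k + (n - k) = n from by omega, ← hlen, List.rotate_length]

theorem step1 (n : ℕ) (hn : 1 ≤ n) :
    n * Nat.card {t : BTree // t.size = n} = Nat.card (Codes n) := by
  rw [← Nat.card_eq_of_bijective _ (Φ_bij n hn), Nat.card_prod]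
  simp [mul_comm]

instance sbFinite (d s : ℕ) : Finite {f : Fin d → ℕ // ∑ i, f i = s} := by
  apply Finite.of_injective (fun f => (fun i => (⟨f.1 i, by
    have hle : f.1 i ≤ s := by
      have h1 := Finset.single_le_sum (fun j _ => Nat.zero_le (f.1 j)) (Finset.mem_univ i)
      rw [f.2] at h1
      exact h1
    omega⟩ : Fin (s + 1))))
  intro f g h
  apply Subtype.ext
  funext i
  have := congrFun h i
  simpa using this

def sbSplit (d s : ℕ) :
    {g : Fin d → ℕ // ∑ i, g i = s + 1} ⊕ {f : Fin (d + 1) → ℕ // ∑ i, f i = s} →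
      {f : Fin (d + 1) → ℕ // ∑ i, f i = s + 1}
  | .inl g => ⟨Fin.cons 0 g.1, by rw [Fin.sum_cons, g.2]; omega⟩
  | .inr f => ⟨Fin.cons (f.1 0 + 1) (Fin.tail f.1), by
      rw [Fin.sum_cons]
      have := f.2
      rw [Fin.sum_univ_succ] at this
      simp only [Fin.tail]
      omega⟩

lemma sbSplit_bij (d s : ℕ) : Function.Bijective (sbSplit d s) := by
  constructor
  · rintro (g | f) (g' | f') h
    · have := congrArg Subtype.val h
      simp only [sbSplit] at this
      have htails := congrArg Fin.tail this
      rw [Fin.tail_cons, Fin.tail_cons] at htails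
      rw [Sum.inl.injEq]
      exact Subtype.ext htails
    · exfalso
      have := congrFun (congrArg Subtype.val h) 0
      simp [sbSplit] at this
    · exfalso
      have := congrFun (congrArg Subtype.val h) 0
      simp [sbSplit] at this
    · have := congrArg Subtype.val h
      simp only [sbSplit] at this
      have h0 := congrFun this 0
      simp only [Fin.cons_zero] at h0
      have htails := congrArg Fin.tail this
      rw [Fin.tail_cons, Fin.tail_cons] at htails
      rw [Sum.inr.injEq]
      apply Subtype.ext
      funext i
      refine Fin.cases ?_ ?_ i
      · omega
      · intro j
        exact congrFun htails j
  · rintro ⟨h, hh⟩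
    rcases Nat.eq_zero_or_pos (h 0) with h0 | h0
    · refine ⟨.inl ⟨Fin.tail h, ?_⟩, ?_⟩
      · rw [Fin.sum_univ_succ] at hh
        simp only [Fin.tail]
        omega
      · apply Subtype.ext
        simp only [sbSplit]
        rw [← h0, Fin.cons_self_tail]
    · refine ⟨.inr ⟨Fin.cons (h 0 - 1) (Fin.tail h), ?_⟩, ?_⟩
      · rw [Fin.sum_cons]
        rw [Fin.sum_univ_succ] at hh
        simp only [Fin.tail]
        omega
      · apply Subtype.ext
        simp only [sbSplit, Fin.cons_zero, Fin.tail_cons]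
        rw [show h 0 - 1 + 1 = h 0 from by omega, Fin.cons_self_tail]

theorem starsBars : ∀ d s : ℕ, Nat.card {f : Fin d → ℕ // ∑ i, f i = s}
    = (s + d - 1).choose s := by
  intro d
  induction d with
  | zero =>
    intro s
    cases s with
    | zero =>
      rw [show ((0:ℕ) + 0 - 1).choose 0 = 1 from rfl, Nat.card_eq_one_iff_unique]
      refine ⟨⟨fun a b => ?_⟩, ⟨⟨fun i => i.elim0, by simp⟩⟩⟩
      apply Subtype.ext
      funext i
      exact i.elim0
    | succ s =>
      have : IsEmpty {f : Fin 0 → ℕ // ∑ i, f i = s + 1} := by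
        constructor
        rintro ⟨f, hf⟩
        simp at hf
      rw [Nat.card_of_isEmpty]
      rw [show s + 1 + 0 - 1 = s from by omega]
      exact (Nat.choose_eq_zero_of_lt (by omega)).symm
  | succ d ihd =>
    intro s
    induction s with
    | zero =>
      rw [Nat.choose_zero_right]
      rw [Nat.card_eq_one_iff_unique]
      refine ⟨⟨fun a b => ?_⟩, ⟨⟨fun i => 0, by simp⟩⟩⟩
      · apply Subtype.ext
        funext i
        have ha : ∀ j, a.1 j = 0 := by
          intro j
          have := a.2
          have hb := b.2
          have h1 := Finset.single_le_sum (fun j _ => Nat.zero_le (a.1 j))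
            (Finset.mem_univ j)
          rw [a.2] at h1
          omega
        have hb : ∀ j, b.1 j = 0 := by
          intro j
          have h1 := Finset.single_le_sum (fun j _ => Nat.zero_le (b.1 j))
            (Finset.mem_univ j)
          rw [b.2] at h1
          omega
        rw [ha i, hb i]
    | succ s ihs =>
      have e1 : s + 1 + d - 1 = s + d := by clear ihd ihs; omega
      have e2 : s + (d + 1) - 1 = s + d := by clear ihd ihs; omega
      have e3 : s + 1 + (d + 1) - 1 = s + d + 1 := by clear ihd ihs; omega
      have hcard := Nat.card_eq_of_bijective _ (sbSplit_bij d s)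
      rw [Nat.card_sum, ihd (s + 1), ihs] at hcard
      rw [← hcard, e1, e2, e3, Nat.choose_succ_succ (s + d) s]
      exact Nat.add_comm _ _

def tupToCode (n : ℕ) (f : {f : Fin n → ℕ × ℕ // (∑ i, ((f i).1 + (f i).2)) + 1 = n}) :
    Codes n :=
  ⟨List.ofFn f.1, by
    refine ⟨List.length_ofFn (f := f.1), ?_⟩
    have : wsum (List.ofFn f.1) = ∑ i, ((f.1 i).1 + (f.1 i).2) := by
      rw [wsum, List.map_ofFn, List.sum_ofFn]
      rfl
    rw [this, f.2]⟩

lemma tupToCode_bij (n : ℕ) : Function.Bijective (tupToCode n) := by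
  constructor
  · intro f g h
    have := congrArg Subtype.val h
    simp only [tupToCode] at this
    exact Subtype.ext (List.ofFn_injective this)
  · rintro ⟨L, hl, hw⟩
    have hwL : wsum L + 1 = n := hw
    subst hl
    refine ⟨⟨L.get, ?_⟩, ?_⟩
    · have : wsum (List.ofFn L.get) = ∑ i, ((L.get i).1 + (L.get i).2) := by
        rw [wsum, List.map_ofFn, List.sum_ofFn]
        rfl
      rw [List.ofFn_get] at this
      rw [← this, hwL]
    · apply Subtype.ext
      simp only [tupToCode]
      exact List.ofFn_get L

def pairSplit (n : ℕ) (f : Fin n → ℕ × ℕ) : Fin (n + n) → ℕ :=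
  fun j => Sum.elim (fun i => (f i).1) (fun i => (f i).2) (finSumFinEquiv.symm j)

lemma pairSplit_sum (n : ℕ) (f : Fin n → ℕ × ℕ) :
    ∑ j, pairSplit n f j = ∑ i, ((f i).1 + (f i).2) := by
  unfold pairSplit
  rw [Equiv.sum_comp finSumFinEquiv.symm]
  rw [Fintype.sum_sum_type]
  simp [Finset.sum_add_distrib]

lemma pairSplit_inj (n : ℕ) : Function.Injective (pairSplit n) := by
  intro f g h
  funext i
  have h1 := congrFun h (finSumFinEquiv (Sum.inl i))
  have h2 := congrFun h (finSumFinEquiv (Sum.inr i))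
  unfold pairSplit at h1 h2
  rw [Equiv.symm_apply_apply] at h1 h2
  simp only [Sum.elim_inl, Sum.elim_inr] at h1 h2
  exact Prod.ext h1 h2

lemma pairSplit_surj (n : ℕ) : Function.Surjective (pairSplit n) := by
  intro g
  refine ⟨fun i => (g (finSumFinEquiv (Sum.inl i)), g (finSumFinEquiv (Sum.inr i))), ?_⟩
  funext j
  unfold pairSplit
  rcases hx : finSumFinEquiv.symm j with x | x <;>
    · simp only [Sum.elim_inl, Sum.elim_inr]
      rw [← hx, Equiv.apply_symm_apply]

def codeSplit (n : ℕ) (hn : 1 ≤ n)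
    (f : {f : Fin n → ℕ × ℕ // (∑ i, ((f i).1 + (f i).2)) + 1 = n}) :
    {g : Fin (n + n) → ℕ // ∑ j, g j = n - 1} :=
  ⟨pairSplit n f.1, by rw [pairSplit_sum]; have := f.2; omega⟩

lemma codeSplit_bij (n : ℕ) (hn : 1 ≤ n) : Function.Bijective (codeSplit n hn) := by
  constructor
  · intro f g h
    exact Subtype.ext (pairSplit_inj n (congrArg Subtype.val h))
  · rintro ⟨g, hg⟩
    obtain ⟨f, hf⟩ := pairSplit_surj n g
    refine ⟨⟨f, ?_⟩, Subtype.ext hf⟩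
    have := pairSplit_sum n f
    rw [hf] at this
    omega

theorem card_biplane_trees_aux (n : ℕ) (hn : 1 ≤ n) :
    n * Nat.card {t : BTree // t.size = n} = Nat.choose (3 * n - 2) (n - 1) := by
  rw [step1 n hn]
  rw [← Nat.card_eq_of_bijective _ (tupToCode_bij n)]
  rw [Nat.card_eq_of_bijective _ (codeSplit_bij n hn)]
  rw [starsBars (n + n) (n - 1)]
  congr 1
  omega

end BPT

theorem card_biplane_trees (n : ℕ) (hn : 1 ≤ n) :
    n * Nat.card {t : BTree // t.size = n} = Nat.choose (3 * n - 2) (n - 1) :=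
  BPT.card_biplane_trees_aux n hn
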